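/- Let A_1, ..., A_n be events in a probability space and let G be a negative dependency graph for these events. Suppose x_1, ..., x_n ∈ [0,1) satisfy P(A_i) ≤ x_i · ∏_{j ∈ J_i} (1 - x_j) for every i ∈ [n], where J_i is the set of neighbors of i in G. Then P(∩_{i=1}^n A_i^c) ≥ ∏_{i=1}^n (1 - x_i) > 0. -/
import Mathlib


open MeasureTheory Finset

/-- **Lovász Local Lemma** (general / lopsided version).
If `G` is a negative dependency graph for events `A 1, …, A n` (expressed by the
hypothesis `hndg`, using conditional probabilities `P(A i | ⋂_{j ∈ S} (A j)ᶜ) ≤ P(A i)`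
for `S` consisting of non-neighbors of `i`), and `x i ∈ [0,1)` satisfy
`P(A i) ≤ x i * ∏_{j ∈ J i} (1 - x j)`, then
`P(⋂ i, (A i)ᶜ) ≥ ∏ i, (1 - x i) > 0`. -/
theorem lovasz_local_lemma {Ω : Type*} [MeasurableSpace Ω] (μ : Measure Ω)
    [IsProbabilityMeasure μ] {n : ℕ} (A : Fin n → Set Ω)
    (hA : ∀ i, MeasurableSet (A i))
    (G : SimpleGraph (Fin n)) [DecidableRel G.Adj]
    (hndg : ∀ (i : Fin n) (S : Finset (Fin n)), i ∉ S → (∀ j ∈ S, ¬ G.Adj i j) →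
      0 < μ (⋂ j ∈ S, (A j)ᶜ) →
      (μ (A i ∩ ⋂ j ∈ S, (A j)ᶜ)).toReal / (μ (⋂ j ∈ S, (A j)ᶜ)).toReal
        ≤ (μ (A i)).toReal)
    (x : Fin n → ℝ) (hx : ∀ i, x i ∈ Set.Ico (0 : ℝ) 1)
    (hP : ∀ i, (μ (A i)).toReal ≤ x i * ∏ j ∈ G.neighborFinset i, (1 - x j)) :
    ∏ i, (1 - x i) ≤ (μ (⋂ i, (A i)ᶜ)).toReal ∧ 0 < ∏ i, (1 - x i) := by
  classical
  set Q : Finset (Fin n) → ℝ := fun S => (μ (⋂ j ∈ S, (A j)ᶜ)).toReal with hQdef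
  have hQ0 : Q ∅ = 1 := by simp [hQdef]
  have hx0 : ∀ i, 0 ≤ x i := fun i => (hx i).1
  have hx1 : ∀ i, x i < 1 := fun i => (hx i).2
  have h1x : ∀ i, 0 < 1 - x i := fun i => by linarith [hx1 i]
  have hQnn : ∀ S, 0 ≤ Q S := fun S => ENNReal.toReal_nonneg
  -- splitting lemma
  have hsplit : ∀ (j : Fin n) (S : Finset (Fin n)),
      Q (insert j S) = Q S - (μ (A j ∩ ⋂ k ∈ S, (A k)ᶜ)).toReal := by
    intro j S
    have h1 : μ ((⋂ k ∈ S, (A k)ᶜ) ∩ A j) + μ ((⋂ k ∈ S, (A k)ᶜ) \ A j)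
        = μ (⋂ k ∈ S, (A k)ᶜ) := measure_inter_add_diff _ (hA j)
    have h2 : (μ ((⋂ k ∈ S, (A k)ᶜ) ∩ A j)).toReal
        + (μ ((⋂ k ∈ S, (A k)ᶜ) \ A j)).toReal = Q S := by
      rw [← ENNReal.toReal_add (measure_ne_top μ _) (measure_ne_top μ _), h1]
    have e1 : (⋂ k ∈ S, (A k)ᶜ) ∩ A j = A j ∩ ⋂ k ∈ S, (A k)ᶜ := Set.inter_comm _ _
    have e2 : (⋂ k ∈ S, (A k)ᶜ) \ A j = ⋂ k ∈ insert j S, (A k)ᶜ := by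
      rw [Finset.set_biInter_insert, Set.diff_eq, Set.inter_comm]
    rw [e1, e2] at h2
    simp only [hQdef]
    linarith
  -- main induction
  have main : ∀ N : ℕ, ∀ S : Finset (Fin n), S.card ≤ N →
      ((∀ T ⊆ S, (∏ j ∈ S \ T, (1 - x j)) * Q T ≤ Q S) ∧
       (∀ i ∉ S, (μ (A i ∩ ⋂ j ∈ S, (A j)ᶜ)).toReal ≤ x i * Q S)) := by
    intro N
    induction N with
    | zero =>
      intro S hS
      have hSe : S = ∅ := card_eq_zero.mp (Nat.le_zero.mp hS)
      subst hSe
      constructor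
      · intro T hT
        have hTe : T = ∅ := subset_empty.mp hT
        subst hTe; simp
      · intro i _
        have hprod1 : (∏ j ∈ G.neighborFinset i, (1 - x j)) ≤ 1 :=
          Finset.prod_le_one (fun j _ => le_of_lt (h1x j)) (fun j _ => by linarith [hx0 j])
        have h2 : (μ (A i)).toReal ≤ x i := by
          have := hP i
          nlinarith [hx0 i]
        simpa [hQ0] using h2
    | succ N ih =>
      have haN : ∀ S : Finset (Fin n), S.card ≤ N + 1 →
          ∀ T ⊆ S, (∏ j ∈ S \ T, (1 - x j)) * Q T ≤ Q S := by
        intro S hS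
        suffices key : ∀ k : ℕ, ∀ T ⊆ S, (S \ T).card = k →
            (∏ j ∈ S \ T, (1 - x j)) * Q T ≤ Q S by
          intro T hT; exact key _ T hT rfl
        intro k
        induction k with
        | zero =>
          intro T hT h0
          have hTe : S \ T = ∅ := card_eq_zero.mp h0
          have hTS : T = S := by
            apply Finset.Subset.antisymm hT
            intro a haS
            by_contra hna
            have : a ∈ S \ T := mem_sdiff.mpr ⟨haS, hna⟩
            simp [hTe] at this
          subst hTS; simp [hTe]
        | succ k ihk =>
          intro T hT hk
          obtain ⟨j, hj⟩ : (S \ T).Nonempty := card_pos.mp (by omega)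
          have hjS : j ∈ S := (mem_sdiff.mp hj).1
          have hjT : j ∉ T := (mem_sdiff.mp hj).2
          have hT' : insert j T ⊆ S := insert_subset hjS hT
          have hcard' : (S \ insert j T).card = k := by
            rw [Finset.sdiff_insert, card_erase_of_mem hj]; omega
          have hTcard : T.card ≤ N := by
            have hss : T ⊂ S := Finset.ssubset_iff_of_subset hT |>.mpr ⟨j, hjS, hjT⟩
            have := Finset.card_lt_card hss
            omega
          have hb := (ih T hTcard).2 j hjT
          have hstep : (1 - x j) * Q T ≤ Q (insert j T) := by
            have hs := hsplit j T
            nlinarith [hQnn T]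
          have hrec := ihk (insert j T) hT' hcard'
          have hprodeq : (∏ j' ∈ S \ T, (1 - x j')) =
              (1 - x j) * ∏ j' ∈ S \ insert j T, (1 - x j') := by
            rw [Finset.sdiff_insert]
            exact (Finset.mul_prod_erase _ (fun j' => 1 - x j') hj).symm
          have hpnn : 0 ≤ ∏ j' ∈ S \ insert j T, (1 - x j') :=
            Finset.prod_nonneg (fun j' _ => le_of_lt (h1x j'))
          calc (∏ j' ∈ S \ T, (1 - x j')) * Q T
              = (∏ j' ∈ S \ insert j T, (1 - x j')) * ((1 - x j) * Q T) := by
                rw [hprodeq]; ring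
            _ ≤ (∏ j' ∈ S \ insert j T, (1 - x j')) * Q (insert j T) :=
                mul_le_mul_of_nonneg_left hstep hpnn
            _ ≤ Q S := hrec
      intro S hS
      refine ⟨haN S hS, ?_⟩
      intro i hiS
      set T := S.filter (fun j => ¬ G.Adj i j) with hTdef
      have hTS : T ⊆ S := filter_subset _ _
      have hiT : i ∉ T := fun h => hiS (hTS h)
      have hTadj : ∀ j ∈ T, ¬ G.Adj i j := fun j hj => (mem_filter.mp hj).2
      have hQTpos : 0 < Q T := by
        have h := haN T (le_trans (card_le_card hTS) hS) ∅ (empty_subset _)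
        have hp : 0 < ∏ j ∈ T, (1 - x j) := prod_pos (fun j _ => h1x j)
        simp only [sdiff_empty, hQ0, mul_one] at h
        linarith
      have hμTpos : 0 < μ (⋂ j ∈ T, (A j)ᶜ) :=
        (ENNReal.toReal_pos_iff.mp hQTpos).1
      have hcond := hndg i T hiT hTadj hμTpos
      have h1 : (μ (A i ∩ ⋂ j ∈ T, (A j)ᶜ)).toReal ≤ (μ (A i)).toReal * Q T :=
        (div_le_iff₀ hQTpos).mp hcond
      have hmono : (μ (A i ∩ ⋂ j ∈ S, (A j)ᶜ)).toReal
          ≤ (μ (A i ∩ ⋂ j ∈ T, (A j)ᶜ)).toReal := by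
        apply ENNReal.toReal_mono (measure_ne_top μ _)
        apply measure_mono
        apply Set.inter_subset_inter_right
        exact Set.biInter_subset_biInter_left hTS
      have hsub : S \ T ⊆ G.neighborFinset i := by
        intro j hj
        rw [SimpleGraph.mem_neighborFinset]
        rcases mem_sdiff.mp hj with ⟨hjS, hjT⟩
        by_contra hadj
        exact hjT (mem_filter.mpr ⟨hjS, hadj⟩)
      have hSTnn : 0 ≤ ∏ j ∈ S \ T, (1 - x j) :=
        Finset.prod_nonneg (fun j _ => le_of_lt (h1x j))
      have hprod : ∏ j ∈ G.neighborFinset i, (1 - x j) ≤ ∏ j ∈ S \ T, (1 - x j) := by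
        calc ∏ j ∈ G.neighborFinset i, (1 - x j)
            = (∏ j ∈ G.neighborFinset i \ (S \ T), (1 - x j)) * ∏ j ∈ S \ T, (1 - x j) :=
              (prod_sdiff hsub).symm
          _ ≤ ∏ j ∈ S \ T, (1 - x j) :=
              mul_le_of_le_one_left hSTnn
                (Finset.prod_le_one (fun j _ => le_of_lt (h1x j))
                  (fun j _ => by linarith [hx0 j]))
      have hQcmp : (∏ j ∈ S \ T, (1 - x j)) * Q T ≤ Q S := haN S hS T hTS
      have hPi := hP i
      calc (μ (A i ∩ ⋂ j ∈ S, (A j)ᶜ)).toReal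
          ≤ (μ (A i ∩ ⋂ j ∈ T, (A j)ᶜ)).toReal := hmono
        _ ≤ (μ (A i)).toReal * Q T := h1
        _ ≤ (x i * ∏ j ∈ G.neighborFinset i, (1 - x j)) * Q T :=
            mul_le_mul_of_nonneg_right hPi (le_of_lt hQTpos)
        _ ≤ (x i * ∏ j ∈ S \ T, (1 - x j)) * Q T := by
            apply mul_le_mul_of_nonneg_right _ (le_of_lt hQTpos)
            exact mul_le_mul_of_nonneg_left hprod (hx0 i)
        _ = x i * ((∏ j ∈ S \ T, (1 - x j)) * Q T) := by ring
        _ ≤ x i * Q S := mul_le_mul_of_nonneg_left hQcmp (hx0 i)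
  have hfin := (main n univ (by simp)).1 ∅ (empty_subset _)
  simp only [sdiff_empty, hQ0, mul_one] at hfin
  have hpos : 0 < ∏ i, (1 - x i) := prod_pos (fun i _ => h1x i)
  refine ⟨?_, hpos⟩
  have heq : (⋂ i, (A i)ᶜ) = ⋂ j ∈ (univ : Finset (Fin n)), (A j)ᶜ := by simp
  rw [heq]
  exact hfin
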